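/- Let S = Sz(q) with q = 2^(2m+1) ≥ 8, and let i > 1 divide q + 2^(m+1) + 1 (respectively q − 2^(m+1) + 1). Then the number of elements of S of order i equals φ(i)·q^2(q − 2^(m+1) + 1)(q−1)/4 (respectively φ(i)·q^2(q + 2^(m+1) + 1)(q−1)/4). -/

import Mathlib

open Finset

section Aux

variable {S : Type*} [Group S] [Fintype S]

private lemma conj_map_map (a b : S) (U : Subgroup S) :
    Subgroup.map (MulAut.conj a).toMonoidHom
      (Subgroup.map (MulAut.conj b).toMonoidHom U)
      = Subgroup.map (MulAut.conj (a * b)).toMonoidHom U := by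
  rw [Subgroup.map_map]
  congr 1
  ext x
  simp [mul_assoc]

private lemma conj_map_eq_self_iff (h : S) (U : Subgroup S) :
    Subgroup.map (MulAut.conj h).toMonoidHom U = U ↔ h ∈ (Subgroup.normalizer (U : Set S)) := by
  constructor
  · intro hEq
    rw [Subgroup.mem_normalizer_iff]
    intro x
    constructor
    · intro hx
      rw [← hEq]
      exact ⟨x, hx, rfl⟩
    · intro hx
      rw [← hEq, Subgroup.mem_map_equiv] at hx
      simpa [mul_assoc] using hx
  · intro hN
    ext x
    rw [Subgroup.mem_map_equiv, MulAut.conj_symm_apply]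
    have hN' := (Subgroup.mem_normalizer_iff.mp (inv_mem hN)) x
    simpa [mul_assoc] using hN'.symm

private lemma count_lemma (U : Subgroup S) (hcyc : IsCyclic U)
    (hrel : U.relIndex (Subgroup.normalizer (U : Set S)) = 4)
    (hpart : ∀ x : S, x ≠ 1 → orderOf x ∣ Nat.card U →
      ∃! K : Subgroup S,
        (∃ g : S, K = Subgroup.map (MulAut.conj g).toMonoidHom U) ∧ x ∈ K)
    {i : ℕ} (hi : 1 < i) (hd : i ∣ Nat.card U) :
    Nat.card {x : S | orderOf x = i} * (4 * Nat.card U)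
      = Nat.totient i * Fintype.card S := by
  classical
  set n := Nat.card U with hn
  set f : S → Subgroup S := fun g => Subgroup.map (MulAut.conj g).toMonoidHom U with hf
  have hf1 : f 1 = U := by
    show Subgroup.map _ U = U
    ext x; simp
  have hfiber : ∀ a b : S, f a = f b ↔ a⁻¹ * b ∈ (Subgroup.normalizer (U : Set S)) := by
    intro a b
    rw [← conj_map_eq_self_iff]
    constructor
    · intro h
      have e1 : f (a⁻¹ * b) = Subgroup.map (MulAut.conj a⁻¹).toMonoidHom (f b) :=
        (conj_map_map a⁻¹ b U).symm
      have e2 : Subgroup.map (MulAut.conj a⁻¹).toMonoidHom (f a) = f (a⁻¹ * a) :=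
        conj_map_map a⁻¹ a U
      show f (a⁻¹ * b) = U
      rw [e1, ← h, e2, inv_mul_cancel, hf1]
    · intro h
      have hU' : f (a⁻¹ * b) = U := h
      have e3 : f (a * (a⁻¹ * b)) = Subgroup.map (MulAut.conj a).toMonoidHom (f (a⁻¹ * b)) :=
        (conj_map_map a (a⁻¹ * b) U).symm
      have hb : f b = f (a * (a⁻¹ * b)) := by rw [mul_inv_cancel_left]
      rw [hb, e3, hU']
  -- the finset of conjugates
  set T : Finset (Subgroup S) := Finset.image f univ with hT
  -- each conjugate is cyclic of cardinality n
  have hconj : ∀ g : S, Nat.card (f g) = n ∧ IsCyclic (f g) := by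
    intro g
    have e : ↥U ≃* ↥(f g) :=
      Subgroup.equivMapOfInjective U _ (MulAut.conj g).injective
    exact ⟨(Nat.card_congr e.toEquiv).symm,
      isCyclic_of_surjective e.toMonoidHom e.surjective⟩
  -- cardinality of the normalizer
  have hNcard : Nat.card (Subgroup.normalizer (U : Set S)) = 4 * n := by
    have h1 : (U.subgroupOf (Subgroup.normalizer (U : Set S))).index * Nat.card (U.subgroupOf (Subgroup.normalizer (U : Set S)))
        = Nat.card (Subgroup.normalizer (U : Set S)) := Subgroup.index_mul_card _
    have h2 : Nat.card (U.subgroupOf (Subgroup.normalizer (U : Set S))) = n :=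
      Nat.card_congr (Subgroup.subgroupOfEquivOfLe Subgroup.le_normalizer).toEquiv
    rw [h2] at h1
    have h3 : (U.subgroupOf (Subgroup.normalizer (U : Set S))).index = 4 := hrel
    rw [← h1, h3]
  -- |S| = |T| * (4n)
  have hScard : Fintype.card S = T.card * (4 * n) := by
    have hcf := Finset.card_eq_sum_card_fiberwise
      (f := f) (s := (univ : Finset S)) (t := T)
      (fun x _ => Finset.mem_image_of_mem f (mem_univ x))
    rw [Finset.card_univ] at hcf
    rw [hcf, Finset.sum_congr rfl (g := fun _ => 4 * n) ?_, Finset.sum_const, smul_eq_mul]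
    intro K hK
    obtain ⟨g₀, _, hg₀⟩ := Finset.mem_image.mp hK
    show (univ.filter (fun a => f a = K)).card = 4 * n
    rw [← hNcard]
    have hNF : Nat.card (Subgroup.normalizer (U : Set S)) = (((Subgroup.normalizer (U : Set S)) : Set S).toFinset).card := by
      rw [← Set.ncard_eq_toFinset_card']
      exact Nat.card_coe_set_eq _
    rw [hNF]
    apply Finset.card_bij' (fun g _ => g₀⁻¹ * g) (fun h _ => g₀ * h)
    · intro a ha
      simp only [Finset.mem_filter, Finset.mem_univ, true_and] at ha
      rw [Set.mem_toFinset]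
      exact (hfiber g₀ a).mp (hg₀.trans ha.symm)
    · intro a ha
      rw [Set.mem_toFinset] at ha
      simp only [Finset.mem_filter, Finset.mem_univ, true_and]
      rw [← hg₀]
      exact ((hfiber g₀ (g₀ * a)).mpr (by simpa using ha)).symm
    · intro a _; group
    · intro a _; group
  -- choice function selecting the unique conjugate containing x
  set F : S → Subgroup S := fun x =>
    if h : x ≠ 1 ∧ orderOf x ∣ n then (hpart x h.1 h.2).choose else ⊥ with hF
  have hFspec : ∀ x : S, ∀ _ : x ≠ 1, ∀ _ : orderOf x ∣ n,
      ((∃ g : S, F x = f g) ∧ x ∈ F x) ∧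
        ∀ K : Subgroup S, ((∃ g : S, K = f g) ∧ x ∈ K) → K = F x := by
    intro x h1 h2
    have hFx : F x = (hpart x h1 h2).choose := dif_pos ⟨h1, h2⟩
    have hspec := (hpart x h1 h2).choose_spec
    rw [hFx]
    exact ⟨⟨hspec.1.1, hspec.1.2⟩, fun K hK => hspec.2 K hK⟩
  -- counting elements of order i
  set A : Finset S := univ.filter (fun x => orderOf x = i) with hA
  have hmemA : ∀ x ∈ A, x ≠ 1 ∧ orderOf x ∣ n := by
    intro x hx
    rw [hA, Finset.mem_filter] at hx
    refine ⟨?_, hx.2 ▸ hd⟩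
    rintro rfl
    rw [orderOf_one] at hx
    omega
  have hAcard : A.card = T.card * Nat.totient i := by
    have hmap : ∀ x ∈ A, F x ∈ T := by
      intro x hx
      obtain ⟨h1, h2⟩ := hmemA x hx
      obtain ⟨⟨⟨g, hg⟩, _⟩, _⟩ := hFspec x h1 h2
      rw [hT, hg]
      exact Finset.mem_image_of_mem f (mem_univ g)
    rw [Finset.card_eq_sum_card_fiberwise hmap,
      Finset.sum_congr rfl (g := fun _ => Nat.totient i) ?_, Finset.sum_const, smul_eq_mul]
    intro K hK
    obtain ⟨g₀, _, hg₀⟩ := Finset.mem_image.mp hK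
    -- fiber = elements of K of order i
    have hfiberEq : A.filter (fun x => F x = K)
        = univ.filter (fun x : S => x ∈ K ∧ orderOf x = i) := by
      ext x
      constructor
      · intro hx
        obtain ⟨hxA, hFx⟩ := Finset.mem_filter.mp hx
        obtain ⟨_, hox⟩ := Finset.mem_filter.mp hxA
        have hx1 : x ≠ 1 := by
          rintro rfl; rw [orderOf_one] at hox; omega
        have hx2 : orderOf x ∣ n := hox ▸ hd
        obtain ⟨⟨_, hmem⟩, _⟩ := hFspec x hx1 hx2
        exact Finset.mem_filter.mpr ⟨mem_univ x, hFx ▸ hmem, hox⟩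
      · intro hx
        obtain ⟨_, hxK, hox⟩ := Finset.mem_filter.mp hx
        have hx1 : x ≠ 1 := by
          rintro rfl; rw [orderOf_one] at hox; omega
        have hx2 : orderOf x ∣ n := hox ▸ hd
        obtain ⟨_, huniq⟩ := hFspec x hx1 hx2
        refine Finset.mem_filter.mpr ⟨Finset.mem_filter.mpr ⟨mem_univ x, hox⟩, ?_⟩
        exact (huniq K ⟨⟨g₀, hg₀.symm⟩, hxK⟩).symm
    rw [hfiberEq]
    show (univ.filter (fun x : S => x ∈ K ∧ orderOf x = i)).card = Nat.totient i
    -- count elements of order i in the cyclic group K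
    obtain ⟨hKn, hKcyc⟩ := hconj g₀
    rw [hg₀] at hKn hKcyc
    haveI := hKcyc
    have hdK : i ∣ Fintype.card ↥K := by
      rw [← Nat.card_eq_fintype_card, hKn]; exact hd
    have htot := IsCyclic.card_orderOf_eq_totient (α := ↥K) hdK
    rw [← htot]
    apply Finset.card_bij' (fun x hx => (⟨x, (Finset.mem_filter.mp hx).2.1⟩ : ↥K))
      (fun y _ => (y : S))
    case hi =>
      intro x hx
      obtain ⟨_, _, hox⟩ := Finset.mem_filter.mp hx
      simp only [Finset.mem_filter, Finset.mem_univ, true_and]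
      rw [Subgroup.orderOf_mk]
      exact hox
    case hj =>
      intro y hy
      rw [Finset.mem_filter] at hy
      refine Finset.mem_filter.mpr ⟨Finset.mem_univ _, y.2, ?_⟩
      rw [Subgroup.orderOf_coe]
      exact hy.2
    case left_inv => intro x _; rfl
    case right_inv => intro y _; rfl
  -- the set has the same cardinality as A
  have hsetA : Nat.card {x : S | orderOf x = i} = A.card := by
    rw [Nat.card_coe_set_eq, Set.ncard_eq_toFinset_card', Set.toFinset_setOf]
  rw [hsetA, hAcard, hScard]
  ring

private lemma pow_arith (m : ℕ) :
    (2 ^ (2 * m + 1) + 2 ^ (m + 1) + 1) * (2 ^ (2 * m + 1) - 2 ^ (m + 1) + 1)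
      = (2 ^ (2 * m + 1)) ^ 2 + 1 := by
  have hqr : (2 : ℕ) ^ (m + 1) ≤ 2 ^ (2 * m + 1) :=
    Nat.pow_le_pow_right (by norm_num) (by omega)
  have h2 : (2 : ℕ) ^ (m + 1) * 2 ^ (m + 1) = 2 * 2 ^ (2 * m + 1) := by
    rw [← pow_add, ← pow_succ']
    congr 1
    omega
  obtain ⟨k, hk⟩ := Nat.exists_eq_add_of_le hqr
  rw [hk] at h2 ⊢
  rw [Nat.add_sub_cancel_left]
  nlinarith [h2]

end Aux

/-- Let `S = Sz(q)`, `q = 2^(2m+1) ≥ 8`: a group of order `q^2(q^2+1)(q-1)` with cyclic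
subgroups `U₁`, `U₂` of orders `q + 2^(m+1) + 1` and `q - 2^(m+1) + 1` each satisfying
`|N_S(Uₜ) : Uₜ| = 4`, such that every nontrivial element of order dividing `|Uₜ|` lies
in exactly one conjugate of `Uₜ`. Then for `i > 1` dividing `q + 2^(m+1) + 1`
(respectively `q - 2^(m+1) + 1`), the number of elements of order `i` in `S` equals
`φ(i)·q^2(q - 2^(m+1) + 1)(q-1)/4` (respectively `φ(i)·q^2(q + 2^(m+1) + 1)(q-1)/4`). -/
theorem stmt_13 (m : ℕ) (hm : 1 ≤ m) (S : Type*) [Group S] [Fintype S]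
    (hcard : Fintype.card S =
      (2 ^ (2 * m + 1)) ^ 2 * ((2 ^ (2 * m + 1)) ^ 2 + 1) * (2 ^ (2 * m + 1) - 1))
    (U₁ U₂ : Subgroup S) (hcyc₁ : IsCyclic U₁) (hcyc₂ : IsCyclic U₂)
    (hU₁ : Nat.card U₁ = 2 ^ (2 * m + 1) + 2 ^ (m + 1) + 1)
    (hU₂ : Nat.card U₂ = 2 ^ (2 * m + 1) - 2 ^ (m + 1) + 1)
    (hindex₁ : Subgroup.relIndex U₁ (Subgroup.normalizer (U₁ : Set S)) = 4)
    (hindex₂ : Subgroup.relIndex U₂ (Subgroup.normalizer (U₂ : Set S)) = 4)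
    (hpart₁ : ∀ x : S, x ≠ 1 → orderOf x ∣ 2 ^ (2 * m + 1) + 2 ^ (m + 1) + 1 →
      ∃! K : Subgroup S,
        (∃ g : S, K = Subgroup.map (MulAut.conj g).toMonoidHom U₁) ∧ x ∈ K)
    (hpart₂ : ∀ x : S, x ≠ 1 → orderOf x ∣ 2 ^ (2 * m + 1) - 2 ^ (m + 1) + 1 →
      ∃! K : Subgroup S,
        (∃ g : S, K = Subgroup.map (MulAut.conj g).toMonoidHom U₂) ∧ x ∈ K) :
    (∀ i : ℕ, 1 < i → i ∣ 2 ^ (2 * m + 1) + 2 ^ (m + 1) + 1 →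
      Nat.card {x : S | orderOf x = i} =
        Nat.totient i * ((2 ^ (2 * m + 1)) ^ 2 * (2 ^ (2 * m + 1) - 2 ^ (m + 1) + 1) *
          (2 ^ (2 * m + 1) - 1)) / 4) ∧
    (∀ i : ℕ, 1 < i → i ∣ 2 ^ (2 * m + 1) - 2 ^ (m + 1) + 1 →
      Nat.card {x : S | orderOf x = i} =
        Nat.totient i * ((2 ^ (2 * m + 1)) ^ 2 * (2 ^ (2 * m + 1) + 2 ^ (m + 1) + 1) *
          (2 ^ (2 * m + 1) - 1)) / 4) := by
  constructor
  · intro i hi hdvd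
    have h := count_lemma U₁ hcyc₁ hindex₁
      (fun x hx hdx => hpart₁ x hx (by rwa [hU₁] at hdx)) hi (by rwa [hU₁])
    rw [hU₁, hcard] at h
    have hfact : (2 ^ (2 * m + 1)) ^ 2 * ((2 ^ (2 * m + 1)) ^ 2 + 1) * (2 ^ (2 * m + 1) - 1)
        = (2 ^ (2 * m + 1) + 2 ^ (m + 1) + 1) *
          ((2 ^ (2 * m + 1)) ^ 2 * (2 ^ (2 * m + 1) - 2 ^ (m + 1) + 1) *
            (2 ^ (2 * m + 1) - 1)) := by
      rw [← pow_arith m]; ring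
    refine (Nat.div_eq_of_eq_mul_left (by norm_num) ?_).symm
    have hpos : 0 < 2 ^ (2 * m + 1) + 2 ^ (m + 1) + 1 := by positivity
    apply Nat.eq_of_mul_eq_mul_right hpos
    calc Nat.totient i * ((2 ^ (2 * m + 1)) ^ 2 * (2 ^ (2 * m + 1) - 2 ^ (m + 1) + 1) *
            (2 ^ (2 * m + 1) - 1)) * (2 ^ (2 * m + 1) + 2 ^ (m + 1) + 1)
        = Nat.totient i * ((2 ^ (2 * m + 1) + 2 ^ (m + 1) + 1) *
            ((2 ^ (2 * m + 1)) ^ 2 * (2 ^ (2 * m + 1) - 2 ^ (m + 1) + 1) *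
              (2 ^ (2 * m + 1) - 1))) := by ring
      _ = Nat.totient i * ((2 ^ (2 * m + 1)) ^ 2 * ((2 ^ (2 * m + 1)) ^ 2 + 1) *
            (2 ^ (2 * m + 1) - 1)) := by rw [← hfact]
      _ = Nat.card {x : S | orderOf x = i} *
            (4 * (2 ^ (2 * m + 1) + 2 ^ (m + 1) + 1)) := h.symm
      _ = Nat.card {x : S | orderOf x = i} * 4 * (2 ^ (2 * m + 1) + 2 ^ (m + 1) + 1) := by
            ring
  · intro i hi hdvd
    have h := count_lemma U₂ hcyc₂ hindex₂
      (fun x hx hdx => hpart₂ x hx (by rwa [hU₂] at hdx)) hi (by rwa [hU₂])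
    rw [hU₂, hcard] at h
    have hfact : (2 ^ (2 * m + 1)) ^ 2 * ((2 ^ (2 * m + 1)) ^ 2 + 1) * (2 ^ (2 * m + 1) - 1)
        = (2 ^ (2 * m + 1) - 2 ^ (m + 1) + 1) *
          ((2 ^ (2 * m + 1)) ^ 2 * (2 ^ (2 * m + 1) + 2 ^ (m + 1) + 1) *
            (2 ^ (2 * m + 1) - 1)) := by
      rw [← pow_arith m]; ring
    refine (Nat.div_eq_of_eq_mul_left (by norm_num) ?_).symm
    have hpos : 0 < 2 ^ (2 * m + 1) - 2 ^ (m + 1) + 1 := by positivity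
    apply Nat.eq_of_mul_eq_mul_right hpos
    calc Nat.totient i * ((2 ^ (2 * m + 1)) ^ 2 * (2 ^ (2 * m + 1) + 2 ^ (m + 1) + 1) *
            (2 ^ (2 * m + 1) - 1)) * (2 ^ (2 * m + 1) - 2 ^ (m + 1) + 1)
        = Nat.totient i * ((2 ^ (2 * m + 1) - 2 ^ (m + 1) + 1) *
            ((2 ^ (2 * m + 1)) ^ 2 * (2 ^ (2 * m + 1) + 2 ^ (m + 1) + 1) *
              (2 ^ (2 * m + 1) - 1))) := by ring
      _ = Nat.totient i * ((2 ^ (2 * m + 1)) ^ 2 * ((2 ^ (2 * m + 1)) ^ 2 + 1) *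
            (2 ^ (2 * m + 1) - 1)) := by rw [← hfact]
      _ = Nat.card {x : S | orderOf x = i} *
            (4 * (2 ^ (2 * m + 1) - 2 ^ (m + 1) + 1)) := h.symm
      _ = Nat.card {x : S | orderOf x = i} * 4 * (2 ^ (2 * m + 1) - 2 ^ (m + 1) + 1) := by
            ring
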